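/- Let G be a finite group and let V be an irreducible finite-dimensional complex representation of G. Then the dimension of V divides the order of G. -/

import Mathlib

noncomputable section AuxDegreeDvd

open LinearMap Module Polynomial Representation

variable {G : Type*} [Group G] [Fintype G]
variable {V : Type*} [AddCommGroup V] [Module ℂ V] [FiniteDimensional ℂ V] [Nontrivial V]

private lemma schur_aux (ρ : Representation ℂ G V)
    (hirr : ∀ p : Submodule ℂ V, (∀ g : G, ∀ v ∈ p, ρ g v ∈ p) → p = ⊥ ∨ p = ⊤)
    (f : Module.End ℂ V) (hf : ∀ g : G, ρ g * f = f * ρ g) :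
    ∃ μ : ℂ, f = μ • 1 := by
  obtain ⟨μ, hμ⟩ := Module.End.exists_eigenvalue f
  refine ⟨μ, ?_⟩
  have hinv : ∀ g : G, ∀ v ∈ Module.End.eigenspace f μ, ρ g v ∈ Module.End.eigenspace f μ := by
    intro g v hv
    rw [Module.End.mem_eigenspace_iff] at hv ⊢
    have h1 : ρ g (f v) = f (ρ g v) := by
      have := congrArg (fun t : Module.End ℂ V => t v) (hf g)
      simpa [Module.End.mul_apply] using this
    rw [← h1, hv, map_smul]
  have hE : Module.End.eigenspace f μ = ⊤ := by
    rcases hirr _ hinv with h | h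
    · exact absurd h (Module.End.hasEigenvalue_iff.mp hμ)
    · exact h
  ext v
  have hv : v ∈ Module.End.eigenspace f μ := hE ▸ Submodule.mem_top
  rw [Module.End.mem_eigenspace_iff] at hv
  simpa using hv

private lemma invariants_linHom_aux (ρ : Representation ℂ G V)
    (hirr : ∀ p : Submodule ℂ V, (∀ g : G, ∀ v ∈ p, ρ g v ∈ p) → p = ⊥ ∨ p = ⊤) :
    Representation.invariants (ρ.linHom ρ) = ℂ ∙ (1 : Module.End ℂ V) := by
  ext f
  rw [Representation.mem_invariants, Submodule.mem_span_singleton]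
  constructor
  · intro hf
    have hcomm : ∀ g : G, ρ g * f = f * ρ g := by
      intro g
      have h1 := hf g
      rw [Representation.linHom_apply] at h1
      calc ρ g * f = (ρ g * (f * ρ g⁻¹)) * ρ g := by
            rw [mul_assoc, mul_assoc, ← map_mul, inv_mul_cancel, map_one, mul_one]
        _ = f * ρ g := by
            rw [show ρ g * (f * ρ g⁻¹) = f from h1]
    obtain ⟨μ, rfl⟩ := schur_aux ρ hirr f hcomm
    exact ⟨μ, rfl⟩
  · rintro ⟨a, rfl⟩ g
    rw [Representation.linHom_apply]
    ext v
    simp only [LinearMap.comp_apply, LinearMap.smul_apply, Module.End.one_apply, map_smul]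
    congr 1
    rw [← Module.End.mul_apply (ρ g) (ρ g⁻¹), ← map_mul, mul_inv_cancel, map_one,
      Module.End.one_apply]

private lemma orth_aux (ρ : Representation ℂ G V)
    (hirr : ∀ p : Submodule ℂ V, (∀ g : G, ∀ v ∈ p, ρ g v ∈ p) → p = ⊥ ∨ p = ⊤) :
    ∑ g : G, LinearMap.trace ℂ V (ρ g⁻¹) * LinearMap.trace ℂ V (ρ g)
      = (Fintype.card G : ℂ) := by
  have hN : (Fintype.card G : ℂ) ≠ 0 := Nat.cast_ne_zero.mpr Fintype.card_ne_zero
  haveI : Invertible (Fintype.card G : ℂ) := invertibleOfNonzero hN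
  set σ := ρ.linHom ρ with hσ
  have htr : ∀ g : G, LinearMap.trace ℂ _ (σ g)
      = LinearMap.trace ℂ V (ρ g⁻¹) * LinearMap.trace ℂ V (ρ g) := by
    intro g
    have hconj : σ g = (dualTensorHomEquiv ℂ V V).conj
        (TensorProduct.map (ρ.dual g) (ρ g)) := by
      rw [LinearEquiv.conj_apply]
      apply LinearMap.ext
      intro x
      have hcomm := Representation.dualTensorHom_comm ρ ρ g
      have hx : dualTensorHom ℂ V V ((dualTensorHomEquiv ℂ V V).symm x) = x := by
        rw [← dualTensorHomEquivOfBasis_toLinearMap (b := Module.Free.chooseBasis ℂ V)]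
        exact (dualTensorHomEquiv ℂ V V).apply_symm_apply x
      have := congrArg (fun t => t ((dualTensorHomEquiv ℂ V V).symm x)) hcomm
      simp only [LinearMap.comp_apply] at this
      rw [hx] at this
      simp only [LinearMap.comp_apply, LinearEquiv.coe_coe]
      rw [← this]
      rw [← dualTensorHomEquivOfBasis_toLinearMap (b := Module.Free.chooseBasis ℂ V)]
      rfl
    rw [hconj, LinearMap.trace_conj', LinearMap.trace_tensorProduct',
      Representation.dual_apply, LinearMap.trace_transpose']
  have h1 : LinearMap.trace ℂ _ (Representation.averageMap σ)
      = (Module.finrank ℂ (Representation.invariants σ) : ℂ) :=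
    (Representation.isProj_averageMap σ).trace
  have h2 : Representation.averageMap σ = ⅟(Fintype.card G : ℂ) • ∑ g : G, σ g := by
    rw [Representation.averageMap, GroupAlgebra.average, map_smul, map_sum]
    congr 1
    refine Finset.sum_congr rfl fun g _ => ?_
    exact Representation.asAlgebraHom_single_one σ g
  have h4 : Module.finrank ℂ (Representation.invariants σ) = 1 := by
    rw [invariants_linHom_aux ρ hirr]
    have h10 : (1 : Module.End ℂ V) ≠ 0 := by
      obtain ⟨v, hv⟩ := exists_ne (0 : V)
      intro h
      apply hv
      have := congrArg (fun t : Module.End ℂ V => t v) h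
      simpa using this
    exact finrank_span_singleton h10
  rw [h2, map_smul, map_sum] at h1
  rw [h4] at h1
  have h5 : ∑ g : G, LinearMap.trace ℂ _ (σ g)
      = ∑ g : G, LinearMap.trace ℂ V (ρ g⁻¹) * LinearMap.trace ℂ V (ρ g) :=
    Finset.sum_congr rfl fun g _ => htr g
  rw [h5] at h1
  have := congrArg (fun x : ℂ => (Fintype.card G : ℂ) * x) h1
  simpa [smul_eq_mul, mul_invOf_cancel_left'] using this

private lemma trace_integral_aux (ρ : Representation ℂ G V) (g : G) :
    IsIntegral ℤ (LinearMap.trace ℂ V (ρ g)) := by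
  classical
  set N := Fintype.card G with hNdef
  have hN0 : N ≠ 0 := Fintype.card_ne_zero
  let b := Module.finBasis ℂ V
  set A := LinearMap.toMatrix b b (ρ g) with hAdef
  have hA : LinearMap.trace ℂ V (ρ g) = A.trace := LinearMap.trace_eq_matrix_trace ℂ b (ρ g)
  rw [hA, Matrix.trace_eq_sum_roots_charpoly]
  have hroot : ∀ μ ∈ A.charpoly.roots, μ ^ N = 1 := by
    intro μ hμ
    have hne : A.charpoly ≠ 0 := A.charpoly_monic.ne_zero
    have hev : A.charpoly.eval μ = 0 := (Polynomial.mem_roots hne).mp hμ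
    have hdet : (Matrix.scalar _ μ - A).det = 0 := by
      rw [Matrix.charpoly, eval_det, Matrix.matPolyEquiv_charmatrix] at hev
      simpa using hev
    obtain ⟨v, hv0, hv⟩ := Matrix.exists_mulVec_eq_zero_iff.mpr hdet
    have hmv : A.mulVec v = μ • v := by
      rw [Matrix.sub_mulVec] at hv
      have : (Matrix.scalar _ μ).mulVec v = μ • v := by
        funext i
        simp [Matrix.scalar, Matrix.mulVec_diagonal]
      rw [this] at hv
      linear_combination (norm := module) -hv
    have hpow : ∀ k : ℕ, (A ^ k).mulVec v = μ ^ k • v := by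
      intro k
      induction k with
      | zero => simp [Matrix.one_mulVec]
      | succ k ih =>
        rw [pow_succ', ← Matrix.mulVec_mulVec, ih, Matrix.mulVec_smul, hmv, smul_smul,
          pow_succ', mul_comm]
    have hAN : A ^ N = 1 := by
      have h1 : (ρ g) ^ N = 1 := by
        rw [← map_pow, pow_card_eq_one, map_one]
      have h2 : A = LinearMap.toMatrixAlgEquiv b (ρ g) := rfl
      rw [h2, ← map_pow, h1, map_one]
    have := hpow N
    rw [hAN, Matrix.one_mulVec] at this
    obtain ⟨i, hi⟩ := Function.ne_iff.mp hv0
    have h2 : v i = μ ^ N * v i := by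
      have := congrFun this i
      simpa using this
    have h4 : μ ^ N * v i = 1 * v i := by rw [one_mul, ← h2]
    exact mul_right_cancel₀ hi h4
  have hmem : A.charpoly.roots.sum ∈ integralClosure ℤ ℂ := by
    refine Subalgebra.multiset_sum_mem _ fun μ hμ => ?_
    refine ⟨Polynomial.X ^ N - 1, ?_, ?_⟩
    · exact Polynomial.monic_X_pow_sub_C 1 hN0
    · simpa using sub_eq_zero.mpr (hroot μ hμ)
  exact hmem

end AuxDegreeDvd

/-- The dimension of an irreducible finite-dimensional complex representation of a
finite group divides the order of the group. -/
theorem finrank_dvd_card_of_irreducible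
    (G : Type*) [Group G] [Fintype G]
    (V : Type*) [AddCommGroup V] [Module ℂ V] [FiniteDimensional ℂ V] [Nontrivial V]
    (ρ : Representation ℂ G V)
    (hirr : ∀ p : Submodule ℂ V, (∀ g : G, ∀ v ∈ p, ρ g v ∈ p) → p = ⊥ ∨ p = ⊤) :
    Module.finrank ℂ V ∣ Fintype.card G := by
  classical
  set n := Module.finrank ℂ V with hndef
  set N := Fintype.card G with hNdef
  set χ : G → ℂ := fun g => LinearMap.trace ℂ V (ρ g) with hχdef
  have hχint : ∀ g : G, IsIntegral ℤ (χ g) := fun g => trace_integral_aux ρ g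
  -- the central operator T
  set T : Module.End ℂ V := ∑ g : G, χ g⁻¹ • (ρ g : Module.End ℂ V) with hTdef
  have hTcomm : ∀ h : G, ρ h * T = T * ρ h := by
    intro h
    have hclass : ∀ a b : G, χ (a * b) = χ (b * a) := by
      intro a b
      simp only [hχdef]
      rw [show ρ (a * b) = ρ a * ρ b from map_mul ρ a b, LinearMap.trace_mul_comm,
        ← map_mul]
    calc ρ h * T = ∑ g : G, χ g⁻¹ • (ρ h * ρ g) := by
          rw [hTdef, Finset.mul_sum]
          exact Finset.sum_congr rfl fun g _ => by rw [mul_smul_comm]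
      _ = ∑ g : G, χ g⁻¹ • (ρ (h * g) : Module.End ℂ V) := by
          exact Finset.sum_congr rfl fun g _ => by rw [map_mul]
      _ = ∑ x : G, χ (h⁻¹ * x)⁻¹ • (ρ x : Module.End ℂ V) := by
          refine Fintype.sum_equiv (Equiv.mulLeft h) _ _ fun g => ?_
          simp
      _ = ∑ x : G, χ (x * h⁻¹)⁻¹ • (ρ x : Module.End ℂ V) := by
          refine Finset.sum_congr rfl fun x _ => ?_
          congr 1
          simp only [mul_inv_rev, inv_inv]
          exact hclass x⁻¹ h
      _ = ∑ g : G, χ g⁻¹ • (ρ (g * h) : Module.End ℂ V) := by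
          refine (Fintype.sum_equiv (Equiv.mulRight h) _ _ fun g => ?_).symm
          simp
      _ = T * ρ h := by
          rw [hTdef, Finset.sum_mul]
          exact Finset.sum_congr rfl fun g _ => by rw [map_mul, smul_mul_assoc]
  obtain ⟨μ, hμ⟩ := schur_aux ρ hirr T hTcomm
  have hn0 : 0 < n := Module.finrank_pos
  have hN0 : 0 < N := Fintype.card_pos
  -- trace computation: μ * n = N
  have htrT : μ * n = N := by
    have h1 : LinearMap.trace ℂ V T = ∑ g : G, χ g⁻¹ * χ g := by
      rw [hTdef, map_sum]
      exact Finset.sum_congr rfl fun g _ => by rw [map_smul, smul_eq_mul]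
    have h2 : LinearMap.trace ℂ V T = μ * n := by
      rw [hμ, map_smul, LinearMap.trace_one, smul_eq_mul, hndef]
    rw [← h2, h1]
    exact orth_aux ρ hirr
  -- Cayley-Hamilton: μ is a root of the charpoly of left multiplication by z
  set Am := MonoidAlgebra ℂ G with hAmdef
  set z : Am := ∑ g : G, MonoidAlgebra.single g (χ g⁻¹) with hzdef
  set b : Module.Basis G ℂ Am := MonoidAlgebra.basis G ℂ with hbdef
  haveI : Module.Finite ℂ Am := Module.Finite.of_basis b
  set L : Module.End ℂ Am := Algebra.lmul ℂ Am z with hLdef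
  set A : Matrix G G ℂ := LinearMap.toMatrix b b L with hAdef
  have hzmul : ∀ h : G, z * MonoidAlgebra.single h 1
      = ∑ x : G, MonoidAlgebra.single (x * h) (χ x⁻¹) := by
    intro h
    rw [hzdef, Finset.sum_mul]
    refine Finset.sum_congr rfl fun x _ => ?_
    rw [MonoidAlgebra.single_mul_single, mul_one]
  have hAentry : ∀ g h : G, A g h = χ (h * g⁻¹) := by
    intro g h
    rw [hAdef, LinearMap.toMatrix_apply]
    have hb : b h = MonoidAlgebra.single h 1 := rfl
    have hrepr : ∀ y : Am, b.repr y g = y.coeff g := fun y => rfl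
    rw [hb, hrepr]
    have : L (MonoidAlgebra.single h 1) = z * MonoidAlgebra.single h 1 := rfl
    rw [this, hzmul h]
    rw [MonoidAlgebra.coeff_sum, Finsupp.finset_sum_apply]
    rw [Finset.sum_eq_single (g * h⁻¹)]
    · simp
    · intro x _ hx
      rw [MonoidAlgebra.coeff_single, Finsupp.single_apply, if_neg]
      intro hxe
      exact hx (by rw [← hxe]; group)
    · intro hx
      exact absurd (Finset.mem_univ _) hx
  have hchz : Polynomial.aeval z A.charpoly = 0 := by
    have h1 : L.charpoly = A.charpoly := (LinearMap.charpoly_toMatrix L b).symm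
    have h2 : Polynomial.aeval L L.charpoly = 0 := LinearMap.aeval_self_charpoly L
    rw [hLdef, Polynomial.aeval_algHom_apply (Algebra.lmul ℂ Am) z L.charpoly] at h2
    have h3 : Algebra.lmul ℂ Am (Polynomial.aeval z L.charpoly) 1 = 0 := by rw [h2]; rfl
    rw [← h1]
    simpa using h3
  have hTz : Representation.asAlgebraHom ρ z = T := by
    rw [hzdef, map_sum, hTdef]
    exact Finset.sum_congr rfl fun g _ => Representation.asAlgebraHom_single ρ g _
  have hTroot : Polynomial.aeval T A.charpoly = 0 := by
    rw [← hTz, Polynomial.aeval_algHom_apply (Representation.asAlgebraHom ρ) z, hchz,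
      map_zero]
  have hmuroot : A.charpoly.eval μ = 0 := by
    have hT1 : T = algebraMap ℂ (Module.End ℂ V) μ := by
      rw [hμ, Algebra.algebraMap_eq_smul_one]
    rw [hT1, Polynomial.aeval_algebraMap_apply] at hTroot
    have hinj : Function.Injective (algebraMap ℂ (Module.End ℂ V)) := by
      have : Nontrivial (Module.End ℂ V) := by
        refine ⟨1, 0, ?_⟩
        obtain ⟨v, hv⟩ := exists_ne (0 : V)
        intro h
        exact hv (by simpa using congrArg (fun t : Module.End ℂ V => t v) h)
      exact (algebraMap ℂ (Module.End ℂ V)).injective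
    have := hinj (by rw [hTroot, map_zero] : algebraMap ℂ (Module.End ℂ V)
      (Polynomial.aeval μ A.charpoly) = algebraMap ℂ (Module.End ℂ V) 0)
    simpa [Polynomial.aeval_def, Polynomial.eval₂_eq_eval_map] using this
  -- μ is an algebraic integer
  have hμint : IsIntegral ℤ μ := by
    set O := integralClosure ℤ ℂ with hOdef
    set Ai : Matrix G G O := fun g h => ⟨χ (h * g⁻¹), hχint _⟩ with hAidef
    have hmap : Ai.map (algebraMap O ℂ) = A := by
      ext g h
      rw [Matrix.map_apply, hAentry g h]
      rfl
    have hOint : IsIntegral O μ := by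
      refine ⟨Ai.charpoly, Ai.charpoly_monic, ?_⟩
      rw [Polynomial.eval₂_eq_eval_map, ← Matrix.charpoly_map, hmap]
      exact hmuroot
    exact isIntegral_trans μ hOint
  -- conclude
  have hq : IsIntegral ℤ ((N : ℚ) / (n : ℚ)) := by
    have hmuval : μ = algebraMap ℚ ℂ ((N : ℚ) / (n : ℚ)) := by
      have hn0' : (n : ℂ) ≠ 0 := Nat.cast_ne_zero.mpr hn0.ne'
      rw [map_div₀, map_natCast, map_natCast, eq_div_iff hn0', htrT]
    rw [hmuval] at hμint
    exact (isIntegral_algebraMap_iff (algebraMap ℚ ℂ).injective).mp hμint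
  obtain ⟨y, hy⟩ := IsIntegrallyClosed.isIntegral_iff.mp hq
  have hdvd : (n : ℤ) ∣ (N : ℤ) := by
    refine ⟨y, ?_⟩
    have hn0' : (n : ℚ) ≠ 0 := Nat.cast_ne_zero.mpr hn0.ne'
    have : (N : ℚ) = (n : ℚ) * (y : ℚ) := by
      rw [show ((y : ℤ) : ℚ) = algebraMap ℤ ℚ y from rfl, hy]
      field_simp
    exact_mod_cast this
  exact_mod_cast hdvd
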